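/- If f is a non-constant solution of {f,λ} = -2Q(λ) with Q holomorphic on a domain U, then f' vanishes nowhere on U; more generally, for the perturbed oscillator potential Q(λ) = 4λ³ - 2λz + 2zy - 4y³ + y'² + y'/(λ-y) + 3/(4(λ-y)²), the derivative of any meromorphic solution f of the Schwarzian equation vanishes only at the pole λ = y of the potential. -/

import Mathlib

open Filter Topology Set

/-- The perturbed cubic oscillator potential
Q(λ) = 4λ³ - 2λz + 2zy - 4y³ + y'² + y'/(λ-y) + 3/(4(λ-y)²). -/
noncomputable def perturbedPotential (y y' z lam : ℂ) : ℂ :=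
  4 * lam ^ 3 - 2 * lam * z + 2 * z * y - 4 * y ^ 3 + y' ^ 2
    + y' / (lam - y) + 3 / (4 * (lam - y) ^ 2)


theorem schwarzian_aux (U : Set ℂ) (hU : IsOpen U) (hUc : IsPreconnected U) (Q f : ℂ → ℂ)
    (hQ : DifferentiableOn ℂ Q U) (hf : AnalyticOn ℂ f U)
    (hnc : ¬ ∀ z ∈ U, ∀ w ∈ U, f z = f w)
    (heq : ∀ z ∈ U, iteratedDeriv 3 f z * deriv f z - (3 / 2) * (iteratedDeriv 2 f z) ^ 2
        = -2 * Q z * (deriv f z) ^ 2) :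
    ∀ z ∈ U, deriv f z ≠ 0 := by
  have hfN : AnalyticOnNhd ℂ f U := hU.analyticOn_iff_analyticOnNhd.mp hf
  have hF1 : AnalyticOnNhd ℂ (deriv f) U := hfN.deriv
  intro z₀ hz₀ h0
  have hF1at : AnalyticAt ℂ (deriv f) z₀ := hF1 z₀ hz₀
  rcases eq_or_ne (analyticOrderAt (deriv f) z₀) ⊤ with htop | hfin
  · -- deriv f vanishes identically: f constant, contradiction
    have hev : ∀ᶠ w in 𝓝 z₀, deriv f w = 0 := analyticOrderAt_eq_top.mp htop
    have hzero : Set.EqOn (deriv f) 0 U :=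
      hF1.eqOn_zero_of_preconnected_of_eventuallyEq_zero hUc hz₀ hev
    obtain ⟨r, hr, hball⟩ := Metric.isOpen_iff.mp hU z₀ hz₀
    have hconst : ∀ w ∈ Metric.ball z₀ r, f w = f z₀ := by
      intro w hw
      apply (convex_ball z₀ r).is_const_of_fderivWithin_eq_zero
        (fun u hu => ((hfN u (hball hu)).differentiableAt).differentiableWithinAt)
        ?_ hw (Metric.mem_ball_self hr)
      intro u hu
      rw [fderivWithin_of_isOpen Metric.isOpen_ball hu]
      ext
      simp [fderiv_eq_smul_deriv, hzero (hball hu)]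
    have hcU : EqOn f (fun _ => f z₀) U := by
      apply hfN.eqOn_of_preconnected_of_eventuallyEq (analyticOnNhd_const) hUc hz₀
      exact eventually_of_mem (Metric.ball_mem_nhds z₀ hr) hconst
    exact hnc fun z hz w hw => by rw [hcU hz, hcU hw]
  · obtain ⟨N, hN⟩ := WithTop.ne_top_iff_exists.mp hfin
    obtain ⟨g, hg, hg0, hfg⟩ := (hF1at.analyticOrderAt_eq_natCast (n := N)).mp hN.symm
    simp only [smul_eq_mul] at hfg
    have hN0 : N ≠ 0 := by
      rintro rfl
      have h1 := hfg.self_of_nhds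
      simp only [pow_zero, one_mul] at h1
      exact hg0 (by rw [← h1, h0])
    obtain ⟨M, rfl⟩ := Nat.exists_eq_succ_of_ne_zero hN0
    have hall : ∀ᶠ w in 𝓝 z₀, (deriv f w = (w - z₀) ^ (M + 1) * g w ∧ AnalyticAt ℂ g w
        ∧ g w ≠ 0 ∧ w ∈ U) :=
      hfg.and ((hg.eventually_analyticAt).and
        ((hg.continuousAt.eventually_ne hg0).and (hU.eventually_mem hz₀)))
    obtain ⟨V, hV, hVopen, hz₀V⟩ := eventually_nhds_iff.mp hall
    have hVU : ∀ w ∈ V, w ∈ U := fun w hw => (hV w hw).2.2.2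
    have hganV : AnalyticOnNhd ℂ g V := fun w hw => (hV w hw).2.1
    have hdgV : AnalyticOnNhd ℂ (deriv g) V := hganV.deriv
    set h : ℂ → ℂ := fun u => deriv g u / g u with hh
    have hhV : AnalyticOnNhd ℂ h V := hdgV.div hganV (fun w hw => (hV w hw).2.2.1)
    have hdhV : AnalyticOnNhd ℂ (deriv h) V := hhV.deriv
    set uu : ℂ → ℂ := fun u => ((M : ℂ) + 1) / (u - z₀) + h u with huu
    have hK2 : ∀ u ∈ V, u ≠ z₀ → iteratedDeriv 2 f u = uu u * deriv f u := by
      intro u hu hune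
      have hgd : DifferentiableAt ℂ g u := (hganV u hu).differentiableAt
      have hpow : HasDerivAt (fun v : ℂ => (v - z₀) ^ (M + 1))
          (((M + 1 : ℕ) : ℂ) * (u - z₀) ^ M * 1) u :=
        ((hasDerivAt_id u).sub_const z₀).pow (M + 1)
      have hphi : HasDerivAt (fun v : ℂ => (v - z₀) ^ (M + 1) * g v)
          ((((M + 1 : ℕ) : ℂ) * (u - z₀) ^ M * 1) * g u + (u - z₀) ^ (M + 1) * deriv g u) u :=
        hpow.mul hgd.hasDerivAt
      have hevu : deriv f =ᶠ[𝓝 u] fun v => (v - z₀) ^ (M + 1) * g v :=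
        eventually_of_mem (hVopen.mem_nhds hu) (fun w hw => (hV w hw).1)
      have h2 : iteratedDeriv 2 f u = deriv (deriv f) u := by
        rw [iteratedDeriv_succ, iteratedDeriv_one]
      rw [h2, hevu.deriv_eq, hphi.deriv, (hV u hu).1]
      have hpne : u - z₀ ≠ 0 := sub_ne_zero.mpr hune
      have hgneu : g u ≠ 0 := (hV u hu).2.2.1
      simp only [huu, hh]
      push_cast
      field_simp
      ring
    have hKey : ∀ w ∈ V, w ≠ z₀ → (w - z₀) ^ 2 * (-2 * Q w)
        = -((M : ℂ) + 1) + (w - z₀) ^ 2 * deriv h w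
          - (1 / 2) * (((M : ℂ) + 1) + (w - z₀) * h w) ^ 2 := by
      intro w hw hwne
      have hpne : w - z₀ ≠ 0 := sub_ne_zero.mpr hwne
      have hgnew : g w ≠ 0 := (hV w hw).2.2.1
      have hF1w : deriv f w = (w - z₀) ^ (M + 1) * g w := (hV w hw).1
      have hF1ne : deriv f w ≠ 0 := by
        rw [hF1w]; exact mul_ne_zero (pow_ne_zero _ hpne) hgnew
      have hhd : HasDerivAt h (deriv h w) w := ((hhV w hw).differentiableAt).hasDerivAt
      have hinv : HasDerivAt (fun u : ℂ => (u - z₀)⁻¹) (-1 / (w - z₀) ^ 2) w := by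
        have := ((hasDerivAt_id w).sub_const z₀).inv hpne
        convert this using 1 <;> rfl
      have huud : HasDerivAt uu (((M : ℂ) + 1) * (-1 / (w - z₀) ^ 2) + deriv h w) w := by
        have h1 := (hinv.const_mul (((M : ℂ) + 1))).add hhd
        simpa [huu, div_eq_mul_inv, Pi.add_def] using h1
      have hevK2 : iteratedDeriv 2 f =ᶠ[𝓝 w] fun u => uu u * deriv f u := by
        have hop : IsOpen (V ∩ {z₀}ᶜ) := hVopen.inter isClosed_singleton.isOpen_compl
        exact eventually_of_mem (hop.mem_nhds ⟨hw, hwne⟩) (fun u hu => hK2 u hu.1 hu.2)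
      have hK3 : iteratedDeriv 3 f w = deriv uu w * deriv f w + uu w * iteratedDeriv 2 f w := by
        rw [show (3 : ℕ) = 2 + 1 from rfl, iteratedDeriv_succ, hevK2.deriv_eq,
          deriv_fun_mul huud.differentiableAt ((hF1 w (hVU w hw)).differentiableAt)]
        rw [iteratedDeriv_succ, iteratedDeriv_one]
      have heqw := heq w (hVU w hw)
      rw [hK3, hK2 w hw hwne, huud.deriv] at heqw
      have hDiv : ((M : ℂ) + 1) * (-1 / (w - z₀) ^ 2) + deriv h w - (uu w) ^ 2 / 2
          = -2 * Q w := by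
        have h2 : (((M : ℂ) + 1) * (-1 / (w - z₀) ^ 2) + deriv h w - (uu w) ^ 2 / 2)
            * (deriv f w) ^ 2 = (-2 * Q w) * (deriv f w) ^ 2 := by
          linear_combination heqw
        exact mul_right_cancel₀ (pow_ne_zero 2 hF1ne) h2
      have huuw : uu w = ((M : ℂ) + 1) / (w - z₀) + h w := rfl
      rw [huuw] at hDiv
      obtain ⟨A, hA⟩ : ∃ A, h w = A := ⟨_, rfl⟩
      obtain ⟨B, hB⟩ : ∃ B, deriv h w = B := ⟨_, rfl⟩
      rw [hA, hB] at hDiv ⊢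
      field_simp at hDiv
      have h3 : ((w - z₀) ^ 2 * (-2 * Q w)) * (2 * (w - z₀) ^ 2)
          = (-((M : ℂ) + 1) + (w - z₀) ^ 2 * B
              - (1 / 2) * (((M : ℂ) + 1) + (w - z₀) * A) ^ 2) * (2 * (w - z₀) ^ 2) := by
        linear_combination -(w - z₀) ^ 2 * hDiv
      exact mul_right_cancel₀ (mul_ne_zero two_ne_zero (pow_ne_zero 2 hpne)) h3
    -- limits
    have hQc : ContinuousAt Q z₀ := (hQ.differentiableAt (hU.mem_nhds hz₀)).continuousAt
    have T0 : Tendsto (fun w => (w - z₀) ^ 2 * (-2 * Q w)) (𝓝[≠] z₀) (𝓝 0) := by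
      have h1 : Tendsto (fun w => (w - z₀) ^ 2 * (-2 * Q w)) (𝓝 z₀)
          (𝓝 ((z₀ - z₀) ^ 2 * (-2 * Q z₀))) :=
        (((continuous_id.sub continuous_const).pow 2).continuousAt).mul
          (continuousAt_const.mul hQc)
      simpa using h1.mono_left nhdsWithin_le_nhds
    have hhc : ContinuousAt h z₀ := (hhV z₀ hz₀V).continuousAt
    have hdhc : ContinuousAt (deriv h) z₀ := (hdhV z₀ hz₀V).continuousAt
    have T1 : Tendsto (fun w => -((M : ℂ) + 1) + (w - z₀) ^ 2 * deriv h w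
        - (1 / 2) * (((M : ℂ) + 1) + (w - z₀) * h w) ^ 2) (𝓝[≠] z₀)
        (𝓝 (-((M : ℂ) + 1) - (1 / 2) * ((M : ℂ) + 1) ^ 2)) := by
      have h1 : ContinuousAt (fun w => -((M : ℂ) + 1) + (w - z₀) ^ 2 * deriv h w
          - (1 / 2) * (((M : ℂ) + 1) + (w - z₀) * h w) ^ 2) z₀ :=
        (continuousAt_const.add
          ((((continuous_id.sub continuous_const).pow 2).continuousAt).mul hdhc)).sub
          (continuousAt_const.mul
            ((continuousAt_const.add
              (((continuous_id.sub continuous_const).continuousAt).mul hhc)).pow 2))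
      have h2 := h1.tendsto.mono_left (nhdsWithin_le_nhds (s := {z₀}ᶜ))
      simpa using h2
    have hEq : ∀ᶠ w in 𝓝[≠] z₀, (w - z₀) ^ 2 * (-2 * Q w)
        = -((M : ℂ) + 1) + (w - z₀) ^ 2 * deriv h w
          - (1 / 2) * (((M : ℂ) + 1) + (w - z₀) * h w) ^ 2 := by
      filter_upwards [nhdsWithin_le_nhds (hVopen.mem_nhds hz₀V), self_mem_nhdsWithin]
        with w hwV hwne
      exact hKey w hwV hwne
    have T0' : Tendsto (fun w => -((M : ℂ) + 1) + (w - z₀) ^ 2 * deriv h w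
        - (1 / 2) * (((M : ℂ) + 1) + (w - z₀) * h w) ^ 2) (𝓝[≠] z₀) (𝓝 0) :=
      T0.congr' hEq
    have hzero : (0 : ℂ) = -((M : ℂ) + 1) - (1 / 2) * ((M : ℂ) + 1) ^ 2 :=
      tendsto_nhds_unique T0' T1
    have hc : ((2 * (M + 1) + (M + 1) ^ 2 : ℕ) : ℂ) = 0 := by
      push_cast
      linear_combination 2 * hzero
    have := Nat.cast_eq_zero.mp hc
    omega

/-- a non-constant solution of the Schwarzian equation {f,λ} = -2Q (written
with cleared denominators: f'''·f' - (3/2)·f''² = -2Q·f'²) with Q holomorphic has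
nowhere-vanishing derivative; in particular, for the perturbed oscillator potential,
the derivative of any solution vanishes only at the pole λ = y of the potential. -/
theorem deriv_ne_zero_of_schwarzian_solution :
    (∀ (U : Set ℂ), IsOpen U → IsPreconnected U → ∀ (Q f : ℂ → ℂ),
      DifferentiableOn ℂ Q U → AnalyticOn ℂ f U →
      (¬ ∀ z ∈ U, ∀ w ∈ U, f z = f w) →
      (∀ z ∈ U, iteratedDeriv 3 f z * deriv f z - (3 / 2) * (iteratedDeriv 2 f z) ^ 2
        = -2 * Q z * (deriv f z) ^ 2) →
      ∀ z ∈ U, deriv f z ≠ 0) ∧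
    (∀ (y y' z : ℂ) (U : Set ℂ), IsOpen U → IsPreconnected U → U ⊆ {lam : ℂ | lam ≠ y} →
      ∀ f : ℂ → ℂ, AnalyticOn ℂ f U →
      (¬ ∀ lam ∈ U, ∀ mu ∈ U, f lam = f mu) →
      (∀ lam ∈ U, iteratedDeriv 3 f lam * deriv f lam
          - (3 / 2) * (iteratedDeriv 2 f lam) ^ 2
        = -2 * perturbedPotential y y' z lam * (deriv f lam) ^ 2) →
      ∀ lam ∈ U, deriv f lam ≠ 0) := by
  constructor
  · exact schwarzian_aux
  · intro y y' z U hU hUc hsub f hfa hnc heq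
    have hQd : DifferentiableOn ℂ (perturbedPotential y y' z) U := by
      intro lam hlam
      have h1 : lam - y ≠ 0 := sub_ne_zero.mpr (hsub hlam)
      have A : DifferentiableAt ℂ
          (fun lam : ℂ => 4 * lam ^ 3 - 2 * lam * z + 2 * z * y - 4 * y ^ 3 + y' ^ 2) lam := by
        fun_prop
      have B : DifferentiableAt ℂ (fun lam : ℂ => y' / (lam - y)) lam :=
        (differentiableAt_const _).div (by fun_prop) h1
      have C : DifferentiableAt ℂ (fun lam : ℂ => 3 / (4 * (lam - y) ^ 2)) lam := by
        refine (differentiableAt_const _).div (by fun_prop) ?_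
        simp [pow_eq_zero_iff, h1]
      exact (((A.add B).add C).differentiableWithinAt : _)
    exact schwarzian_aux U hU hUc (perturbedPotential y y' z) f hQd hfa hnc heq
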